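/- Let A be a bounded operator on a complex Hilbert space 𝓗 and consider the Hilbert representation of the Kronecker quiver given by H₁ = H₂ = 𝓗, f_α = A, f_β = I (or symmetrically f_α = I, f_β = A). If A is strongly irreducible then this representation is indecomposable: the only pairs (T₁,T₂) of idempotent bounded operators on 𝓗 with T₂ A = A T₁ and T₂ = T₁ are (0,0) and (I,I). Moreover, if A is strongly irreducible and dim 𝓗 ≥ 2, the representation is not transitive, since (A,A) is an endomorphism that is not a scalar multiple of the identity. Conversely, if the representation is indecomposable then A is strongly irreducible. -/

import Mathlib

/-- A bounded operator `A` on a complex Hilbert space is *strongly irreducible* if there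
is no pair of non-zero closed `A`-invariant subspaces `M`, `N` with `M ∩ N = 0` and
`M + N = H`. -/
def StronglyIrreducible {H : Type*} [NormedAddCommGroup H] [InnerProductSpace ℂ H]
    (A : H →L[ℂ] H) : Prop :=
  ¬ ∃ M N : Submodule ℂ H,
      IsClosed (M : Set H) ∧ IsClosed (N : Set H) ∧
      (∀ x ∈ M, A x ∈ M) ∧ (∀ x ∈ N, A x ∈ N) ∧
      M ⊓ N = ⊥ ∧ M ⊔ N = ⊤ ∧ M ≠ ⊥ ∧ N ≠ ⊥

/-- **Strong irreducibility of `A` is equivalent to indecomposability of the Kronecker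
representation `(A, I)`.**  Endomorphisms of the representation `f_α = A`, `f_β = I` are
pairs `(T₁,T₂)` with `T₂ A = A T₁` and `T₂ = T₁`.
(1) If `A` is strongly irreducible, the only idempotent endomorphisms are `(0,0)`
and `(I,I)`.
(2) If moreover `dim 𝓗 ≥ 2`, the representation is not transitive: `(A,A)` is an
endomorphism which is not a scalar multiple of the identity.
(3) Conversely, indecomposability implies strong irreducibility. -/
theorem stmt_3 {𝓗 : Type*} [NormedAddCommGroup 𝓗] [InnerProductSpace ℂ 𝓗]
    [CompleteSpace 𝓗] (A : 𝓗 →L[ℂ] 𝓗) :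
    (StronglyIrreducible A →
      ∀ T₁ T₂ : 𝓗 →L[ℂ] 𝓗, T₁ ∘L T₁ = T₁ → T₂ ∘L T₂ = T₂ →
        T₂ ∘L A = A ∘L T₁ → T₂ = T₁ →
        (T₁ = 0 ∧ T₂ = 0) ∨ (T₁ = 1 ∧ T₂ = 1))
    ∧
    (StronglyIrreducible A → 2 ≤ Module.rank ℂ 𝓗 →
      (¬ ∃ c : ℂ, A = c • (1 : 𝓗 →L[ℂ] 𝓗)) ∧
      ¬ (∀ T₁ T₂ : 𝓗 →L[ℂ] 𝓗, T₂ ∘L A = A ∘L T₁ → T₂ = T₁ →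
          ∃ c : ℂ, T₁ = c • (1 : 𝓗 →L[ℂ] 𝓗) ∧ T₂ = c • (1 : 𝓗 →L[ℂ] 𝓗)))
    ∧
    ((∀ T₁ T₂ : 𝓗 →L[ℂ] 𝓗, T₁ ∘L T₁ = T₁ → T₂ ∘L T₂ = T₂ →
        T₂ ∘L A = A ∘L T₁ → T₂ = T₁ →
        (T₁ = 0 ∧ T₂ = 0) ∨ (T₁ = 1 ∧ T₂ = 1)) →
      StronglyIrreducible A) := by

  refine ⟨?_, ?_, ?_⟩
  · -- (1) strong irreducibility ⇒ indecomposable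
    intro hSI T₁ T₂ h1 h2 hcomm heq
    subst T₂
    have hTA : ∀ x, T₁ (A x) = A (T₁ x) := fun x => congrFun (congrArg DFunLike.coe hcomm) x
    have hidem : ∀ x, T₁ (T₁ x) = T₁ x := fun x => congrFun (congrArg DFunLike.coe h1) x
    set M : Submodule ℂ 𝓗 := LinearMap.ker ((1 - T₁ : 𝓗 →L[ℂ] 𝓗) : 𝓗 →ₗ[ℂ] 𝓗) with hMdef
    set N : Submodule ℂ 𝓗 := LinearMap.ker (T₁ : 𝓗 →ₗ[ℂ] 𝓗) with hNdef
    have hmemM : ∀ x, x ∈ M ↔ T₁ x = x := by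
      intro x
      have h0 : (1 - T₁) x = x - T₁ x := by simp
      rw [hMdef, LinearMap.mem_ker, ContinuousLinearMap.coe_coe, h0, sub_eq_zero, eq_comm]
    have hmemN : ∀ x, x ∈ N ↔ T₁ x = 0 := by
      intro x; simp [hNdef, LinearMap.mem_ker]
    by_cases hM0 : M = ⊥
    · left
      have : T₁ = 0 := by
        ext x
        have hx : T₁ x ∈ M := (hmemM _).mpr (hidem x)
        rw [hM0] at hx
        simpa using hx
      exact ⟨this, this⟩
    by_cases hN0 : N = ⊥
    · right
      have : T₁ = 1 := by
        ext x
        have hx : x - T₁ x ∈ N := by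
          rw [hmemN]
          simp [map_sub, hidem]
        rw [hN0] at hx
        have := Submodule.mem_bot (R := ℂ) |>.mp hx
        simp only [ContinuousLinearMap.one_apply]
        linear_combination (norm := abel) -this
      exact ⟨this, this⟩
    exfalso
    apply hSI
    refine ⟨M, N, ?_, ?_, ?_, ?_, ?_, ?_, hM0, hN0⟩
    · exact ContinuousLinearMap.isClosed_ker (1 - T₁)
    · exact ContinuousLinearMap.isClosed_ker T₁
    · intro x hx
      rw [hmemM] at hx ⊢
      rw [hTA, hx]
    · intro x hx
      rw [hmemN] at hx ⊢
      rw [hTA, hx, map_zero]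
    · apply le_antisymm _ bot_le
      intro x hx
      have h1 := (hmemM x).mp hx.1
      have h2 := (hmemN x).mp hx.2
      rw [h2] at h1
      simp [← h1]
    · apply le_antisymm le_top
      intro x _
      have : x = T₁ x + (x - T₁ x) := by abel
      rw [this]
      exact Submodule.add_mem_sup ((hmemM _).mpr (hidem x))
        ((hmemN _).mpr (by simp [map_sub, hidem]))
  · -- (2) not transitive
    intro hSI hrank
    have key : ¬ ∃ c : ℂ, A = c • (1 : 𝓗 →L[ℂ] 𝓗) := by
      rintro ⟨c, hc⟩
      apply hSI
      obtain ⟨x, hx⟩ : ∃ x : 𝓗, x ≠ 0 := by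
        by_contra h
        push_neg at h
        have : Module.rank ℂ 𝓗 = 0 := by
          have : Subsingleton 𝓗 := ⟨fun a b => by rw [h a, h b]⟩
          exact rank_subsingleton' ℂ 𝓗
        rw [this] at hrank
        exact absurd hrank (by simp)
      set M : Submodule ℂ 𝓗 := Submodule.span ℂ {x} with hMdef
      have hMfin : FiniteDimensional ℂ M := by
        rw [hMdef]
        infer_instance
      have hMclosed : IsClosed (M : Set 𝓗) := Submodule.closed_of_finiteDimensional M
      have hMcomplete : CompleteSpace M := hMclosed.completeSpace_coe
      have hcompl : IsCompl M Mᗮ := Submodule.isCompl_orthogonal_of_hasOrthogonalProjection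
      have hAscal : ∀ (p : Submodule ℂ 𝓗) (y : 𝓗), y ∈ p → A y ∈ p := by
        intro p y hy
        rw [hc]
        simpa using p.smul_mem c hy
      have hMne : M ≠ ⊥ := by
        simp only [hMdef, ne_eq, Submodule.span_singleton_eq_bot]
        exact hx
      have hNne : Mᗮ ≠ ⊥ := by
        intro h
        rw [Submodule.orthogonal_eq_bot_iff] at h
        have : Module.rank ℂ 𝓗 ≤ 1 := by
          rw [← rank_top ℂ 𝓗, ← h]
          simpa [hMdef] using rank_span_le (R := ℂ) ({x} : Set 𝓗)
        exact absurd (lt_of_lt_of_le (by norm_num) hrank) (not_lt.mpr this)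
      exact ⟨M, Mᗮ, hMclosed, Submodule.isClosed_orthogonal M, hAscal M, hAscal Mᗮ,
        hcompl.inf_eq_bot, hcompl.sup_eq_top, hMne, hNne⟩
    refine ⟨key, fun h => ?_⟩
    obtain ⟨c, hc, -⟩ := h A A rfl rfl
    exact key ⟨c, hc⟩
  · -- (3) indecomposable ⇒ strongly irreducible
    intro h
    rintro ⟨M, N, hMc, hNc, hMA, hNA, hinf, hsup, hM0, hN0⟩
    have hcompl : IsCompl M N := ⟨disjoint_iff.mpr hinf, codisjoint_iff.mpr hsup⟩
    set pr := M.linearProjOfClosedCompl N hcompl hMc hNc with hprdef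
    set P : 𝓗 →L[ℂ] 𝓗 := M.subtypeL ∘L pr with hPdef
    have hPapp : ∀ x, P x = (pr x : 𝓗) := fun x => rfl
    have hPleft : ∀ m ∈ M, P m = m := by
      intro m hm
      rw [hPapp, hprdef]
      simp only [Submodule.coe_continuous_linearProjOfClosedCompl']
      rw [Submodule.linearProjOfIsCompl_apply_left hcompl ⟨m, hm⟩]
    have hPright : ∀ n ∈ N, P n = 0 := by
      intro n hn
      rw [hPapp, hprdef]
      simp only [Submodule.coe_continuous_linearProjOfClosedCompl']
      rw [Submodule.linearProjOfIsCompl_apply_right hcompl ⟨n, hn⟩]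
      simp
    have hPmem : ∀ x, P x ∈ M := fun x => (pr x).2
    have hPker : ∀ x, x - P x ∈ N := by
      intro x
      obtain ⟨m, hm, n, hn, hmn⟩ := Submodule.mem_sup.mp (hsup ▸ Submodule.mem_top (x := x))
      have hPx : P x = m := by
        rw [← hmn, map_add, hPleft m hm, hPright n hn, add_zero]
      have : x - P x = n := by rw [hPx, ← hmn]; abel
      rw [this]; exact hn
    have hidem : P ∘L P = P := by
      ext x
      exact hPleft _ (hPmem x)
    have hcomm : P ∘L A = A ∘L P := by
      ext x
      show P (A x) = A (P x)
      conv_lhs => rw [show x = P x + (x - P x) by abel]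
      rw [map_add, map_add, hPleft _ (hMA _ (hPmem x)), hPright _ (hNA _ (hPker x))]
      simp
    rcases h P P hidem hidem hcomm rfl with ⟨hP0, -⟩ | ⟨hP1, -⟩
    · obtain ⟨m, hm, hmne⟩ := Submodule.exists_mem_ne_zero_of_ne_bot hM0
      have := hPleft m hm
      rw [hP0] at this
      simp only [ContinuousLinearMap.zero_apply] at this
      exact hmne this.symm
    · obtain ⟨n, hn, hnne⟩ := Submodule.exists_mem_ne_zero_of_ne_bot hN0
      have := hPright n hn
      rw [hP1] at this
      simp only [ContinuousLinearMap.one_apply] at this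
      exact hnne this
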